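/- Let H be a symmetric operator on a finite-dimensional real inner product space and τ ∈ ℝ not an eigenvalue of H. Suppose E_J is an eigenvalue of H strictly closest to τ, i.e., |τ − E_J| < |τ − E| for every other eigenvalue E, with eigenspace V, and let φ₀ be a vector whose orthogonal projection v₀ onto V is nonzero. Define the inverse iteration ψ_{k+1} = (H − τI)^{−1}ψ_k / ‖(H − τI)^{−1}ψ_k‖ starting from ψ₀ = φ₀/‖φ₀‖, and let ζ = min over eigenvalues E ≠ E_J of |τ − E|, ρ = |E_J − τ|/ζ < 1, s = sign((E_J − τ)^{−1}). Then there is a constant C (depending on φ₀) such that ‖ψ_k − s^k v₀/‖v₀‖‖ ≤ C ρ^k for all sufficiently large k. -/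

import Mathlib

open scoped RealInnerProductSpace

/-- Convergence of shifted inverse iteration: if `τ` is not an eigenvalue of the symmetric
operator `H`, `E_J` is the strictly closest eigenvalue (distance `|E_J − τ| < ζ` where `ζ`
lower-bounds `|τ − E|` for every other eigenvalue `E`), `v₀ ≠ 0` is the orthogonal
projection of the initial vector `φ₀` onto the `E_J`-eigenspace, and `T = (H − τI)⁻¹`,
then the iterates `ψ_{k+1} = Tψ_k/‖Tψ_k‖` satisfy
`‖ψ_k − s^k v₀/‖v₀‖‖ ≤ C ρ^k` for large `k`, with `ρ = |E_J − τ|/ζ` and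
`s = sign(E_J − τ)`. -/
theorem inverse_iteration_convergence
    {F : Type*} [NormedAddCommGroup F] [InnerProductSpace ℝ F] [FiniteDimensional ℝ F]
    (H : F →L[ℝ] F) (hH : ∀ x y : F, ⟪H x, y⟫ = ⟪x, H y⟫)
    (τ EJ ζ : ℝ)
    (hτ : ∀ (μ : ℝ) (x : F), x ≠ 0 → H x = μ • x → μ ≠ τ)
    (hclose : |EJ - τ| < ζ)
    (hsep : ∀ (μ : ℝ) (x : F), x ≠ 0 → H x = μ • x → μ ≠ EJ → ζ ≤ |τ - μ|)
    (T : F →L[ℝ] F) (hT : ∀ x : F, H (T x) - τ • T x = x)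
    (φ₀ v₀ : F) (hv₀eig : H v₀ = EJ • v₀) (hv₀ne : v₀ ≠ 0)
    (horth : ∀ u : F, H u = EJ • u → ⟪φ₀ - v₀, u⟫ = 0)
    (ψ : ℕ → F) (hψ0 : ψ 0 = ‖φ₀‖⁻¹ • φ₀)
    (hstep : ∀ k : ℕ, ψ (k + 1) = ‖T (ψ k)‖⁻¹ • T (ψ k)) :
    ∃ (C : ℝ) (N : ℕ), ∀ k ≥ N,
      ‖ψ k - (Real.sign (EJ - τ)) ^ k • (‖v₀‖⁻¹ • v₀)‖ ≤ C * (|EJ - τ| / ζ) ^ k := by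
  have hζpos : 0 < ζ := lt_of_le_of_lt (abs_nonneg _) hclose
  have hEJτ : EJ - τ ≠ 0 := sub_ne_zero.mpr (hτ EJ v₀ hv₀ne hv₀eig)
  have habs : (0:ℝ) < |EJ - τ| := abs_pos.mpr hEJτ
  -- injectivity of H - τ
  have hinj : ∀ x : F, H x - τ • x = 0 → x = 0 := by
    intro x hx
    by_contra hne
    exact hτ τ x hne (sub_eq_zero.mp hx) rfl
  have hTuniq : ∀ x y : F, H y - τ • y = x → y = T x := by
    intro x y hy
    have h1 : H (y - T x) - τ • (y - T x) = 0 := by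
      rw [map_sub, smul_sub,
        show H y - H (T x) - (τ • y - τ • T x)
          = (H y - τ • y) - (H (T x) - τ • T x) by abel,
        hy, hT x, sub_self]
    exact sub_eq_zero.mp (hinj _ h1)
  have hTeig : ∀ (μ : ℝ) (u : F), H u = μ • u → T u = (μ - τ)⁻¹ • u := by
    intro μ u hu
    by_cases hune : u = 0
    · simp [hune]
    have hμτ : μ - τ ≠ 0 := sub_ne_zero.mpr (hτ μ u hune hu)
    symm
    apply hTuniq
    rw [map_smul, hu, smul_smul, smul_smul, ← sub_smul,
      show (μ - τ)⁻¹ * μ - τ * (μ - τ)⁻¹ = 1 by field_simp, one_smul]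
  have hTsym : ∀ x y : F, ⟪T x, y⟫ = ⟪x, T y⟫ := by
    intro x y
    have h1 : ⟪T x, y⟫ = ⟪T x, H (T y)⟫ - τ * ⟪T x, T y⟫ := by
      conv_lhs => rw [← hT y]
      rw [inner_sub_right, real_inner_smul_right]
    have h2 : ⟪x, T y⟫ = ⟪H (T x), T y⟫ - τ * ⟪T x, T y⟫ := by
      conv_lhs => rw [← hT x]
      rw [inner_sub_left, real_inner_smul_left]
    rw [h1, h2, hH]
  have hsym : (H : F →ₗ[ℝ] F).IsSymmetric := fun x y => hH x y
  -- contraction on the orthogonal complement of the EJ-eigenspace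
  have hcontr : ∀ x : F, (∀ u : F, H u = EJ • u → ⟪x, u⟫ = 0) →
      ‖T x‖ ≤ ζ⁻¹ * ‖x‖ := by
    intro x hx
    set b := hsym.eigenvectorBasis rfl with hb
    set μ := hsym.eigenvalues (rfl : Module.finrank ℝ F = Module.finrank ℝ F) with hμ
    have hbeig : ∀ i, H (b i) = μ i • b i := by
      intro i
      have := hsym.apply_eigenvectorBasis rfl i
      simpa [← hb, ← hμ] using this
    have hbne : ∀ i, b i ≠ 0 := fun i => by simpa using b.toBasis.ne_zero i
    have hinT : ∀ i, ⟪b i, T x⟫ = (μ i - τ)⁻¹ * ⟪b i, x⟫ := by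
      intro i
      rw [← hTsym (b i) x, hTeig (μ i) (b i) (hbeig i), real_inner_smul_left]
    have e1 : ∀ z : F, ‖z‖ ^ 2 = ∑ i, ⟪b i, z⟫ ^ 2 := by
      intro z
      rw [← real_inner_self_eq_norm_sq, ← b.sum_inner_mul_inner z z]
      refine Finset.sum_congr rfl fun i _ => ?_
      rw [real_inner_comm z (b i)]
      exact (sq _).symm
    have hsq : ‖T x‖ ^ 2 ≤ (ζ⁻¹ * ‖x‖) ^ 2 := by
      rw [e1 (T x), mul_pow, e1 x, Finset.mul_sum]
      refine Finset.sum_le_sum fun i _ => ?_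
      rw [hinT i]
      by_cases hc : ⟪b i, x⟫ = 0
      · simp [hc]
      · have hμEJ : μ i ≠ EJ := by
          intro h
          apply hc
          rw [real_inner_comm]
          exact hx (b i) (by rw [hbeig i, h])
        have h1 : ζ ≤ |μ i - τ| := by
          have := hsep (μ i) (b i) (hbne i) (hbeig i) hμEJ
          rwa [abs_sub_comm] at this
        have h2 : |(μ i - τ)⁻¹| ≤ ζ⁻¹ := by
          rw [abs_inv]
          exact inv_anti₀ hζpos h1
        calc ((μ i - τ)⁻¹ * ⟪b i, x⟫) ^ 2
            = ((μ i - τ)⁻¹) ^ 2 * ⟪b i, x⟫ ^ 2 := mul_pow _ _ _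
          _ ≤ ζ⁻¹ ^ 2 * ⟪b i, x⟫ ^ 2 := by
              apply mul_le_mul_of_nonneg_right _ (sq_nonneg _)
              rw [← sq_abs]
              exact pow_le_pow_left₀ (abs_nonneg _) h2 2
    have h0 : (0:ℝ) ≤ ζ⁻¹ * ‖x‖ :=
      mul_nonneg (inv_nonneg.mpr hζpos.le) (norm_nonneg _)
    have := Real.sqrt_le_sqrt hsq
    rwa [Real.sqrt_sq (norm_nonneg _), Real.sqrt_sq h0] at this
  -- the iterates
  set w := φ₀ - v₀ with hw
  set a := (EJ - τ)⁻¹ with ha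
  have hane : a ≠ 0 := inv_ne_zero hEJτ
  set y : ℕ → F := fun k => T^[k] w with hy
  set x : ℕ → F := fun k => a ^ k • v₀ + y k with hx
  have hy0 : y 0 = w := rfl
  have hysucc : ∀ k, y (k + 1) = T (y k) := fun k =>
    Function.iterate_succ_apply' T k w
  have hyP : ∀ k, ∀ u : F, H u = EJ • u → ⟪y k, u⟫ = 0 := by
    intro k
    induction k with
    | zero => exact horth
    | succ k ih =>
      intro u hu
      rw [hysucc, hTsym, hTeig EJ u hu, real_inner_smul_right, ih u hu, mul_zero]
  have hynorm : ∀ k, ‖y k‖ ≤ (ζ⁻¹) ^ k * ‖w‖ := by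
    intro k
    induction k with
    | zero => simp [hy0]
    | succ k ih =>
      rw [hysucc]
      calc ‖T (y k)‖ ≤ ζ⁻¹ * ‖y k‖ := hcontr (y k) (hyP k)
        _ ≤ ζ⁻¹ * ((ζ⁻¹) ^ k * ‖w‖) := by
            exact mul_le_mul_of_nonneg_left ih (inv_nonneg.mpr hζpos.le)
        _ = (ζ⁻¹) ^ (k + 1) * ‖w‖ := by ring
  have hTx : ∀ k, T (x k) = x (k + 1) := by
    intro k
    simp only [hx, map_add, map_smul, hTeig EJ v₀ hv₀eig, ← ha, ← hysucc]
    rw [smul_smul]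
    ring_nf
  have hxlow : ∀ k, (|EJ - τ|⁻¹) ^ k * ‖v₀‖ ≤ ‖x k‖ := by
    intro k
    have horto : ⟪a ^ k • v₀, y k⟫ = 0 := by
      rw [real_inner_smul_left, real_inner_comm, hyP k v₀ hv₀eig, mul_zero]
    have hnsq : ‖x k‖ ^ 2 = ‖a ^ k • v₀‖ ^ 2 + ‖y k‖ ^ 2 := by
      rw [hx]
      rw [norm_add_sq_real, horto]
      ring
    have h1 : ‖a ^ k • v₀‖ ^ 2 ≤ ‖x k‖ ^ 2 := by
      rw [hnsq]; nlinarith [sq_nonneg ‖y k‖]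
    have h2 : ‖a ^ k • v₀‖ ≤ ‖x k‖ := by
      have := Real.sqrt_le_sqrt h1
      rwa [Real.sqrt_sq (norm_nonneg _), Real.sqrt_sq (norm_nonneg _)] at this
    calc (|EJ - τ|⁻¹) ^ k * ‖v₀‖ = ‖a ^ k • v₀‖ := by
          rw [norm_smul, Real.norm_eq_abs, abs_pow, ha, abs_inv]
      _ ≤ ‖x k‖ := h2
  have hxpos : ∀ k, 0 < ‖x k‖ := by
    intro k
    refine lt_of_lt_of_le ?_ (hxlow k)
    exact mul_pos (pow_pos (inv_pos.mpr habs) k) (norm_pos_iff.mpr hv₀ne)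
  have hnormalize : ∀ (c : ℝ) (v : F), 0 < c → ‖c • v‖⁻¹ • (c • v) = ‖v‖⁻¹ • v := by
    intro c v hc
    rw [norm_smul, Real.norm_eq_abs, abs_of_pos hc, mul_inv, smul_smul]
    congr 1
    rw [mul_comm, ← mul_assoc, mul_inv_cancel₀ hc.ne', one_mul]
  have hψx : ∀ k, ψ k = ‖x k‖⁻¹ • x k := by
    intro k
    induction k with
    | zero =>
      rw [hψ0]
      have : x 0 = φ₀ := by simp [hx, hy0, hw]
      rw [this]
    | succ k ih =>
      rw [hstep k, ih, map_smul, hTx k, hnormalize _ _ (inv_pos.mpr (hxpos k))]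
  -- sign bookkeeping
  set s := Real.sign (EJ - τ) with hs
  have hssq : s * s = 1 := by
    rcases lt_trichotomy (EJ - τ) 0 with h | h | h
    · rw [hs, Real.sign_of_neg h]; norm_num
    · exact absurd h hEJτ
    · rw [hs, Real.sign_of_pos h]; norm_num
  have hsabs : |s| = 1 := by
    rcases lt_trichotomy (EJ - τ) 0 with h | h | h
    · rw [hs, Real.sign_of_neg h]; norm_num
    · exact absurd h hEJτ
    · rw [hs, Real.sign_of_pos h]; norm_num
  have hsa : a = s * |EJ - τ|⁻¹ := by
    rcases lt_trichotomy (EJ - τ) 0 with h | h | h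
    · rw [ha, hs, Real.sign_of_neg h, abs_of_neg h, inv_neg]
      ring
    · exact absurd h hEJτ
    · rw [ha, hs, Real.sign_of_pos h, abs_of_pos h, one_mul]
  refine ⟨2 * ‖w‖ / ‖v₀‖, 0, fun k _ => ?_⟩
  set u := s ^ k • (‖v₀‖⁻¹ • v₀) with hu
  have hunorm : ‖u‖ = 1 := by
    rw [hu, norm_smul, norm_smul, Real.norm_eq_abs, Real.norm_eq_abs, abs_pow,
      hsabs, one_pow, one_mul, abs_inv, abs_norm, inv_mul_cancel₀ (norm_ne_zero_iff.mpr hv₀ne)]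
  set c := (|EJ - τ|⁻¹) ^ k * ‖v₀‖ with hc
  have hcpos : 0 < c := mul_pos (pow_pos (inv_pos.mpr habs) k) (norm_pos_iff.mpr hv₀ne)
  have hcu : c • u = a ^ k • v₀ := by
    rw [hu, hc, smul_smul, smul_smul, hsa, mul_pow]
    congr 1
    have h1 : ‖v₀‖ * ‖v₀‖⁻¹ = 1 := mul_inv_cancel₀ (norm_ne_zero_iff.mpr hv₀ne)
    calc |EJ - τ|⁻¹ ^ k * ‖v₀‖ * s ^ k * ‖v₀‖⁻¹
        = s ^ k * |EJ - τ|⁻¹ ^ k * (‖v₀‖ * ‖v₀‖⁻¹) := by ring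
      _ = s ^ k * |EJ - τ|⁻¹ ^ k := by rw [h1, mul_one]
  have hxcu : x k - c • u = y k := by
    rw [hcu]
    simp only [hx]
    abel
  -- main estimate
  have hxk := hxpos k
  have key : ‖ψ k - u‖ ≤ 2 * ‖y k‖ / ‖x k‖ := by
    have e2 : ψ k - u = ‖x k‖⁻¹ • (x k - ‖x k‖ • u) := by
      rw [hψx k, smul_sub, smul_smul, inv_mul_cancel₀ (ne_of_gt hxk), one_smul]
    rw [e2, norm_smul, Real.norm_eq_abs, abs_of_pos (inv_pos.mpr hxk)]
    rw [div_eq_inv_mul, mul_comm ‖x k‖⁻¹ _]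
    rw [mul_comm (‖x k‖⁻¹) (2 * ‖y k‖)] at *
    apply mul_le_mul_of_nonneg_right _ (inv_nonneg.mpr hxk.le)
    have t1 : ‖x k - ‖x k‖ • u‖ ≤ ‖x k - c • u‖ + ‖c • u - ‖x k‖ • u‖ := by
      have : x k - ‖x k‖ • u = (x k - c • u) + (c • u - ‖x k‖ • u) := by abel
      rw [this]; exact norm_add_le _ _
    have t2 : ‖c • u - ‖x k‖ • u‖ = |c - ‖x k‖| := by
      rw [← sub_smul, norm_smul, Real.norm_eq_abs, hunorm, mul_one]
    have t3 : |c - ‖x k‖| ≤ ‖x k - c • u‖ := by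
      have h4 : ‖c • u‖ = c := by
        rw [norm_smul, Real.norm_eq_abs, hunorm, mul_one, abs_of_pos hcpos]
      have := abs_norm_sub_norm_le (x k) (c • u)
      rw [h4] at this
      rwa [abs_sub_comm] at this
    have t4 : ‖x k - c • u‖ = ‖y k‖ := by rw [hxcu]
    calc ‖x k - ‖x k‖ • u‖ ≤ ‖x k - c • u‖ + |c - ‖x k‖| := by
          rw [← t2]; exact t1
      _ ≤ ‖y k‖ + ‖y k‖ := by rw [t4]; exact add_le_add le_rfl (t4 ▸ t3)
      _ = 2 * ‖y k‖ := by ring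
  refine key.trans ?_
  have hfin : 2 * ((ζ⁻¹) ^ k * ‖w‖) / c = 2 * ‖w‖ / ‖v₀‖ * (|EJ - τ| / ζ) ^ k := by
    rw [hc]
    field_simp
    ring
    rw [mul_assoc, ← mul_pow, mul_inv_cancel₀ habs.ne', one_pow, mul_one]
  calc 2 * ‖y k‖ / ‖x k‖ ≤ 2 * ((ζ⁻¹) ^ k * ‖w‖) / c := by
        apply div_le_div₀ (by positivity) (by linarith [hynorm k]) hcpos (hxlow k)
    _ = 2 * ‖w‖ / ‖v₀‖ * (|EJ - τ| / ζ) ^ k := hfin
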